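/- Let G be a closed subgroup of S∞ that is Roelcke precompact. Then G has only countably many open subgroups. -/

import Mathlib

open Pointwise

/-- `S∞`: the group of permutations of `ℕ` with the topology of pointwise convergence,
induced by `σ ↦ (σ, σ⁻¹)` from the product topology on `(ℕ → ℕ) × (ℕ → ℕ)`. -/
instance permTop : TopologicalSpace (Equiv.Perm ℕ) :=
  TopologicalSpace.induced (fun σ => ((⇑σ, ⇑σ.symm) : (ℕ → ℕ) × (ℕ → ℕ))) inferInstance

/-- The pointwise stabilizer of a finite set, as a subgroup of `G`. -/
def fixG (G : Subgroup (Equiv.Perm ℕ)) (s : Finset ℕ) : Subgroup G where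
  carrier := {g | ∀ n ∈ s, ((g : Equiv.Perm ℕ)) n = n}
  one_mem' := by intro n hn; rfl
  mul_mem' := by
    intro a b ha hb n hn
    simp only [Subgroup.coe_mul, Equiv.Perm.mul_apply]
    rw [hb n hn, ha n hn]
  inv_mem' := by
    intro a ha n hn
    simp only [Subgroup.coe_inv]
    conv_lhs => rw [← ha n hn]
    exact Equiv.symm_apply_apply _ _

lemma fixG_isOpen (G : Subgroup (Equiv.Perm ℕ)) (s : Finset ℕ) :
    IsOpen ((fixG G s : Subgroup G) : Set G) := by
  have hcont : Continuous fun g : G => ((g : Equiv.Perm ℕ) : ℕ → ℕ) := by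
    have h1 : Continuous fun σ : Equiv.Perm ℕ =>
        ((⇑σ, ⇑σ.symm) : (ℕ → ℕ) × (ℕ → ℕ)) := continuous_induced_dom
    exact (h1.comp continuous_subtype_val).fst
  have : ((fixG G s : Subgroup G) : Set G)
      = ⋂ n ∈ s, {g : G | ((g : Equiv.Perm ℕ)) n = n} := by
    ext g; simp [fixG, Set.mem_iInter]; exact Iff.rfl
  rw [this]
  refine isOpen_biInter_finset (fun n _ => ?_)
  have : {g : G | ((g : Equiv.Perm ℕ)) n = n}
      = (fun g : G => ((g : Equiv.Perm ℕ) : ℕ → ℕ) n) ⁻¹' {n} := rfl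
  rw [this]
  exact ((continuous_apply n).comp hcont).isOpen_preimage _ (isOpen_discrete _)

/-- The pointwise stabilizers of finite sets form a neighbourhood basis of `1` in `S∞`. -/
lemma exists_fix_subset {O : Set (Equiv.Perm ℕ)} (hO : IsOpen O)
    (h1 : (1 : Equiv.Perm ℕ) ∈ O) :
    ∃ s : Finset ℕ, {σ : Equiv.Perm ℕ | ∀ n ∈ s, σ n = n} ⊆ O := by
  rw [isOpen_induced_iff] at hO
  obtain ⟨W, hW, hWO⟩ := hO
  have h1W : ((⇑(1 : Equiv.Perm ℕ), ⇑(1 : Equiv.Perm ℕ).symm) :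
      (ℕ → ℕ) × (ℕ → ℕ)) ∈ W := by
    rw [← hWO] at h1; exact h1
  rw [isOpen_prod_iff] at hW
  obtain ⟨u, v, hu, hv, h1u, h1v, huvW⟩ := hW _ _ h1W
  rw [isOpen_pi_iff] at hu hv
  obtain ⟨I1, U1, hU1, hU1u⟩ := hu _ h1u
  obtain ⟨I2, U2, hU2, hU2v⟩ := hv _ h1v
  refine ⟨I1 ∪ I2, fun σ hσ => ?_⟩
  have hfix : ∀ n ∈ I1 ∪ I2, σ n = n := hσ
  have hσu : ⇑σ ∈ u := by
    apply hU1u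
    intro i hi
    have : σ i = i := hfix i (Finset.mem_union_left _ hi)
    rw [this]
    exact (hU1 i hi).2
  have hσv : ⇑σ.symm ∈ v := by
    apply hU2v
    intro i hi
    have hfi : σ i = i := hfix i (Finset.mem_union_right _ hi)
    have : σ.symm i = i := by
      rw [Equiv.symm_apply_eq]; exact hfi.symm
    rw [this]
    exact (hU2 i hi).2
  have : ((⇑σ, ⇑σ.symm) : (ℕ → ℕ) × (ℕ → ℕ)) ∈ W := huvW ⟨hσu, hσv⟩
  rw [← hWO]; exact this

/-- Every open subgroup of `G` contains one of the basic subgroups `fixG G s`. -/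
lemma exists_fixG_le (G : Subgroup (Equiv.Perm ℕ)) (H : Subgroup G)
    (hH : IsOpen (H : Set G)) : ∃ s : Finset ℕ, fixG G s ≤ H := by
  rw [isOpen_induced_iff] at hH
  obtain ⟨O, hO, hOH⟩ := hH
  have h1 : (1 : Equiv.Perm ℕ) ∈ O := by
    have : ((1 : G) : Equiv.Perm ℕ) ∈ O := by
      have : (1 : G) ∈ (Subtype.val ⁻¹' O : Set G) := by rw [hOH]; exact H.one_mem
      exact this
    simpa using this
  obtain ⟨s, hs⟩ := exists_fix_subset hO h1
  refine ⟨s, fun g hg => ?_⟩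
  have : ((g : Equiv.Perm ℕ)) ∈ O := hs hg
  have : g ∈ (Subtype.val ⁻¹' O : Set G) := this
  rw [hOH] at this
  exact this

/-- Roelcke precompactness: only finitely many subgroups contain a given open subgroup. -/
lemma finite_above (G : Subgroup (Equiv.Perm ℕ))
    (hRP : ∀ U : Set G, IsOpen U → (1 : G) ∈ U →
      ∃ F : Set G, F.Finite ∧ U * F * U = Set.univ)
    (s : Finset ℕ) : {H : Subgroup G | fixG G s ≤ H}.Finite := by
  set V := fixG G s with hV
  obtain ⟨F, hFfin, hF⟩ := hRP (V : Set G) (fixG_isOpen G s) V.one_mem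
  have key : ∀ H1 H2 : Subgroup G, V ≤ H1 → V ≤ H2 →
      (↑H1 ∩ F : Set G) = (↑H2 ∩ F : Set G) → H1 ≤ H2 := by
    intro H1 H2 hV1 hV2 heq h hh
    have : h ∈ ((V : Set G) * F * (V : Set G)) := by rw [hF]; trivial
    obtain ⟨a, ha, w, hw, hah⟩ := this
    obtain ⟨v, hv, f, hf, hvf⟩ := ha
    have hvH1 : v ∈ H1 := hV1 hv
    have hwH1 : w ∈ H1 := hV1 hw
    have hfH1 : f ∈ H1 := by
      have : f = v⁻¹ * h * w⁻¹ := by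
        rw [← hah, ← hvf]; group
      rw [this]
      exact H1.mul_mem (H1.mul_mem (H1.inv_mem hvH1) hh) (H1.inv_mem hwH1)
    have hfH2 : f ∈ H2 := by
      have : f ∈ (↑H1 ∩ F : Set G) := ⟨hfH1, hf⟩
      rw [heq] at this
      exact this.1
    have : h = v * f * w := by rw [← hah, ← hvf]
    rw [this]
    exact H2.mul_mem (H2.mul_mem (hV2 hv) hfH2) (hV2 hw)
  have hinj : Set.InjOn (fun H : Subgroup G => (↑H ∩ F : Set G))
      {H : Subgroup G | V ≤ H} := by
    intro H1 h1 H2 h2 heq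
    exact le_antisymm (key H1 H2 h1 h2 heq) (key H2 H1 h2 h1 heq.symm)
  have himg : ((fun H : Subgroup G => (↑H ∩ F : Set G)) ''
      {H : Subgroup G | V ≤ H}).Finite := by
    apply Set.Finite.subset hFfin.finite_subsets
    rintro t ⟨H, _, rfl⟩
    exact Set.inter_subset_right
  exact Set.Finite.of_finite_image himg hinj

/-- a Roelcke precompact closed subgroup of `S∞` has only countably many
open subgroups. -/
theorem stmt0 (G : Subgroup (Equiv.Perm ℕ)) (hclosed : IsClosed (G : Set (Equiv.Perm ℕ)))
    (hRP : ∀ U : Set G, IsOpen U → (1 : G) ∈ U →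
      ∃ F : Set G, F.Finite ∧ U * F * U = Set.univ) :
    {H : Subgroup G | IsOpen (H : Set G)}.Countable := by
  have hsub : {H : Subgroup G | IsOpen (H : Set G)} ⊆
      ⋃ s : Finset ℕ, {H : Subgroup G | fixG G s ≤ H} := by
    intro H hH
    obtain ⟨s, hs⟩ := exists_fixG_le G H hH
    exact Set.mem_iUnion.mpr ⟨s, hs⟩
  refine Set.Countable.mono hsub ?_
  exact Set.countable_iUnion (fun s => (finite_above G hRP s).countable)
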